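/- Let u, u' ∈ ℝ≥0^n and α ≥ 1. Then the following are equivalent: (i) for every k ∈ {1, …, n}, α · Q_k(u) ≥ Q_k(u'); (ii) for every function h : ℝ≥0^n → ℝ≥0 that is symmetric (invariant under permutations of the coordinates), non-decreasing in each coordinate, and concave, one has α · h(u) ≥ h(u'). -/

import Mathlib

open Finset

/-- `Qk x k` is the sum of the `k` smallest coordinates of `x`, i.e. the least
coordinate sum over subsets of size `k`. -/
noncomputable def Qk {n : ℕ} (x : Fin n → ℝ) (k : ℕ) : ℝ :=
  sInf {s : ℝ | ∃ S : Finset (Fin n), S.card = k ∧ s = ∑ i ∈ S, x i}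

namespace QkAux
variable {n : ℕ}

lemma qset_eq (x : Fin n → ℝ) (k : ℕ) :
    {s : ℝ | ∃ S : Finset (Fin n), S.card = k ∧ s = ∑ i ∈ S, x i}
      = ↑(((univ : Finset (Fin n)).powersetCard k).image (fun S => ∑ i ∈ S, x i)) := by
  ext s
  simp only [Set.mem_setOf_eq, coe_image, Set.mem_image, mem_coe, mem_powersetCard_univ]
  constructor
  · rintro ⟨S, h1, h2⟩; exact ⟨S, h1, h2.symm⟩
  · rintro ⟨S, h1, h2⟩; exact ⟨S, h1, h2.symm⟩

lemma qk_le (x : Fin n → ℝ) {k : ℕ} (S : Finset (Fin n)) (hS : S.card = k) :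
    Qk x k ≤ ∑ i ∈ S, x i := by
  rw [Qk, qset_eq]
  refine csInf_le (Finset.bddBelow _) ?_
  simp only [coe_image, Set.mem_image, mem_coe, mem_powersetCard_univ]
  exact ⟨S, hS, rfl⟩

lemma qk_mem (x : Fin n → ℝ) {k : ℕ} (hk : k ≤ n) :
    ∃ S : Finset (Fin n), S.card = k ∧ Qk x k = ∑ i ∈ S, x i := by
  have hne : {s : ℝ | ∃ S : Finset (Fin n), S.card = k ∧ s = ∑ i ∈ S, x i}.Nonempty := by
    obtain ⟨S, -, hS⟩ := Finset.exists_subset_card_eq (s := (univ : Finset (Fin n))) (n := k)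
      (by simpa using hk)
    exact ⟨∑ i ∈ S, x i, S, hS, rfl⟩
  have hfin : {s : ℝ | ∃ S : Finset (Fin n), S.card = k ∧ s = ∑ i ∈ S, x i}.Finite := by
    rw [qset_eq]; exact Finset.finite_toSet _
  have := hne.csInf_mem hfin
  exact this

lemma qk_perm (x : Fin n → ℝ) (σ : Equiv.Perm (Fin n)) (k : ℕ) :
    Qk (x ∘ σ) k = Qk x k := by
  unfold Qk
  congr 1
  ext s
  simp only [Set.mem_setOf_eq]
  constructor
  · rintro ⟨S, h1, h2⟩
    refine ⟨S.image σ, by rw [Finset.card_image_of_injective _ σ.injective, h1], ?_⟩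
    rw [Finset.sum_image (fun a _ b _ h => σ.injective h)]
    exact h2
  · rintro ⟨S, h1, h2⟩
    refine ⟨S.image σ.symm, by rw [Finset.card_image_of_injective _ σ.symm.injective, h1], ?_⟩
    rw [Finset.sum_image (fun a _ b _ h => σ.symm.injective h)]
    simpa [Function.comp] using h2

lemma qk_mono {x y : Fin n → ℝ} {k : ℕ} (hk : k ≤ n) (hxy : ∀ i, x i ≤ y i) :
    Qk x k ≤ Qk y k := by
  obtain ⟨S, hS, hEq⟩ := qk_mem y hk
  rw [hEq]
  exact le_trans (qk_le x S hS) (Finset.sum_le_sum fun i _ => hxy i)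

lemma qk_nonneg {x : Fin n → ℝ} {k : ℕ} (hk : k ≤ n) (hx : ∀ i, 0 ≤ x i) :
    0 ≤ Qk x k := by
  obtain ⟨S, hS, hEq⟩ := qk_mem x hk
  rw [hEq]
  exact Finset.sum_nonneg fun i _ => hx i

lemma qk_smul {x : Fin n → ℝ} {k : ℕ} (hk : k ≤ n) {α : ℝ} (hα : 0 ≤ α) :
    Qk (fun i => α * x i) k = α * Qk x k := by
  apply le_antisymm
  · obtain ⟨S, hS, hEq⟩ := qk_mem x hk
    calc Qk (fun i => α * x i) k ≤ ∑ i ∈ S, α * x i := qk_le _ S hS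
    _ = α * Qk x k := by rw [hEq, Finset.mul_sum]
  · obtain ⟨S, hS, hEq⟩ := qk_mem (fun i => α * x i) hk
    rw [hEq]
    have := qk_le x S hS
    calc α * Qk x k ≤ α * ∑ i ∈ S, x i := by nlinarith
    _ = ∑ i ∈ S, α * x i := by rw [Finset.mul_sum]

lemma qk_zero (x : Fin n → ℝ) : Qk x 0 = 0 := by
  apply le_antisymm
  · simpa using qk_le x (∅ : Finset (Fin n)) rfl
  · obtain ⟨S, hS, hEq⟩ := qk_mem x (Nat.zero_le n)
    rw [Finset.card_eq_zero] at hS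
    simp [hS] at hEq
    simp [hEq]

/-- prefix-sum -/
noncomputable def P (x : Fin n → ℝ) (m : ℕ) : ℝ :=
  ∑ i ∈ univ.filter (fun i : Fin n => i.val < m), x i

lemma card_filter_lt {k : ℕ} (hk : k ≤ n) :
    (univ.filter (fun i : Fin n => i.val < k)).card = k := by
  have himg : (univ.filter (fun i : Fin n => i.val < k)).image Fin.val = Finset.range k := by
    ext m
    simp only [Finset.mem_image, Finset.mem_filter, Finset.mem_univ, true_and, Finset.mem_range]
    constructor
    · rintro ⟨i, h1, h2⟩; omega
    · intro hm; exact ⟨⟨m, lt_of_lt_of_le hm hk⟩, hm, rfl⟩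
  rw [← Finset.card_image_of_injective _ Fin.val_injective, himg, Finset.card_range]

lemma P_n (x : Fin n → ℝ) : P x n = ∑ i, x i := by
  unfold P
  congr 1
  ext i
  simp [i.isLt]

lemma strictMono_le {k : ℕ} (e : Fin k → Fin n) (he : StrictMono e) :
    ∀ j : Fin k, (j : ℕ) ≤ (e j : ℕ) := by
  intro j
  induction' hj : j.val with m ih generalizing j
  · exact Nat.zero_le _
  · have hm : m < k := by omega
    have := ih ⟨m, hm⟩ rfl
    have hlt : e ⟨m, hm⟩ < e j := he (by simp [Fin.lt_def, hj])
    simp only [Fin.lt_def] at hlt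
    omega

/-- For monotone x, the sum over any k-subset is at least the first-k prefix sum. -/
lemma prefix_le_sum {x : Fin n → ℝ} (hx : Monotone x) {k : ℕ} (hk : k ≤ n)
    (S : Finset (Fin n)) (hS : S.card = k) : P x k ≤ ∑ i ∈ S, x i := by
  classical
  have hSim : S = Finset.image (fun j => S.orderEmbOfFin hS j) univ := by
    rw [← Finset.coe_inj]
    simp only [Finset.coe_image, Finset.coe_univ, Set.image_univ]
    exact (Finset.range_orderEmbOfFin S hS).symm
  have hsum : ∑ i ∈ S, x i = ∑ j : Fin k, x (S.orderEmbOfFin hS j) := by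
    conv_lhs => rw [hSim]
    rw [Finset.sum_image (fun a _ b _ h => (S.orderEmbOfFin hS).injective h)]
  have hfim : univ.filter (fun i : Fin n => i.val < k)
      = Finset.image (fun j => Fin.castLE hk j) univ := by
    ext i
    simp only [Finset.mem_filter, Finset.mem_univ, true_and, Finset.mem_image]
    constructor
    · intro hi; exact ⟨⟨i.val, hi⟩, rfl⟩
    · rintro ⟨j, rfl⟩; exact j.isLt
  have hP : P x k = ∑ j : Fin k, x (Fin.castLE hk j) := by
    unfold P
    rw [hfim, Finset.sum_image (fun a _ b _ h => (Fin.castLE_injective hk) h)]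
  rw [hP, hsum]
  apply Finset.sum_le_sum
  intro j _
  apply hx
  have := strictMono_le (fun j => S.orderEmbOfFin hS j) (S.orderEmbOfFin hS).strictMono j
  exact this

lemma Psplit (x : Fin n → ℝ) {a b : ℕ} (hab : a ≤ b) :
    P x b = P x a + ∑ i ∈ univ.filter (fun i : Fin n => a ≤ i.val ∧ i.val < b), x i := by
  unfold P
  rw [← Finset.sum_union]
  · congr 1
    ext i
    simp only [Finset.mem_union, Finset.mem_filter, Finset.mem_univ, true_and]
    omega
  · rw [Finset.disjoint_filter]
    intro i _ h1 h2
    omega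

lemma Psucc (x : Fin n → ℝ) (a : Fin n) : P x (a.val + 1) = P x a.val + x a := by
  rw [Psplit x (Nat.le_succ a.val)]
  congr 1
  have : univ.filter (fun i : Fin n => a.val ≤ i.val ∧ i.val < a.val + 1) = {a} := by
    ext i
    simp only [Finset.mem_filter, Finset.mem_univ, true_and, Finset.mem_singleton, Fin.ext_iff]
    omega
  rw [this, Finset.sum_singleton]

/-- The key Schur-type induction: a T-transform chain. -/
lemma schur_aux (h : (Fin n → ℝ) → ℝ)
    (hsymm : ∀ (σ : Equiv.Perm (Fin n)) (x : Fin n → ℝ), h (x ∘ σ) = h x)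
    (hconc : ConcaveOn ℝ {x : Fin n → ℝ | ∀ i, 0 ≤ x i} h) :
    ∀ N : ℕ, ∀ x y : Fin n → ℝ, (∀ i, 0 ≤ x i) → (∀ i, 0 ≤ y i) →
      Monotone x → Monotone y →
      (∀ m, m ≤ n → P x m ≤ P y m) → P x n = P y n →
      (univ.filter (fun i => x i ≠ y i)).card ≤ N →
      h x ≤ h y := by
  intro N
  induction N with
  | zero =>
    intro x y _ _ _ _ _ _ hcard
    have hxy : x = y := by
      funext i
      by_contra hne
      have : i ∈ univ.filter (fun i => x i ≠ y i) := by simp [hne]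
      have := Finset.card_pos.mpr ⟨i, this⟩
      omega
    rw [hxy]
  | succ N ih =>
    intro x y hx hy hmx hmy hP hPn hcard
    by_cases hxy : x = y
    · rw [hxy]
    -- the largest index where x < y
    have hKne : (univ.filter (fun i : Fin n => x i < y i)).Nonempty := by
      rw [Finset.filter_nonempty_iff]
      by_contra hc
      push_neg at hc
      simp only [Finset.mem_univ, true_implies, not_lt] at hc
      apply hxy
      funext i
      have hsum : ∑ i, y i = ∑ i, x i := by rw [← P_n, ← P_n, hPn]
      have := (Finset.sum_eq_sum_iff_of_le (fun i _ => hc i)).mp hsum i (Finset.mem_univ i)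
      linarith
    set k := (univ.filter (fun i : Fin n => x i < y i)).max' hKne with hkdef
    have hk1 : x k < y k := by
      have := (univ.filter (fun i : Fin n => x i < y i)).max'_mem hKne
      simpa using this
    have hk2 : ∀ i, x i < y i → i ≤ k := by
      intro i hi
      exact Finset.le_max' _ i (by simpa using hi)
    -- the smallest index above k where x > y
    have hgt : ∀ i, k < i → y i ≤ x i := by
      intro i hki
      by_contra hc
      push_neg at hc
      exact absurd (hk2 i hc) (not_le.mpr hki)
    have hJne : (univ.filter (fun i : Fin n => k < i ∧ y i < x i)).Nonempty := by
      rw [Finset.filter_nonempty_iff]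
      by_contra hc
      push_neg at hc
      simp only [Finset.mem_univ, true_implies] at hc
      have heq : ∀ i : Fin n, k < i → x i = y i := by
        intro i hki
        have := hc i hki
        have := hgt i hki
        linarith
      -- then P x (k+1) = P y (k+1), forcing y k ≤ x k, contradiction
      have hkn : k.val + 1 ≤ n := k.isLt
      have htail : ∑ i ∈ univ.filter (fun i : Fin n => k.val + 1 ≤ i.val ∧ i.val < n), x i
          = ∑ i ∈ univ.filter (fun i : Fin n => k.val + 1 ≤ i.val ∧ i.val < n), y i := by
        apply Finset.sum_congr rfl
        intro i hi
        simp only [Finset.mem_filter] at hi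
        exact heq i (by omega)
      have h1 := Psplit x hkn
      have h2 := Psplit y hkn
      have h3 := Psucc x k
      have h4 := Psucc y k
      have h5 := hP k.val (le_of_lt k.isLt)
      rw [h1, h2, htail] at hPn
      linarith
    set j := (univ.filter (fun i : Fin n => k < i ∧ y i < x i)).min' hJne with hjdef
    have hj1 : k < j ∧ y j < x j := by
      have hmem := (univ.filter (fun i : Fin n => k < i ∧ y i < x i)).min'_mem hJne
      rw [Finset.mem_filter] at hmem
      exact hmem.2
    have hj2 : ∀ i, k < i → y i < x i → j ≤ i := by
      intro i h1 h2
      exact Finset.min'_le _ i (by simp [h1, h2])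
    have hmid : ∀ i, k < i → i < j → x i = y i := by
      intro i h1 h2
      have hgi := hgt i h1
      by_contra hne
      have : y i < x i := lt_of_le_of_ne hgi (fun e => hne e.symm)
      exact absurd (hj2 i h1 this) (not_le.mpr h2)
    have hkj : k ≠ j := ne_of_lt hj1.1
    set δ := min (y k - x k) (x j - y j) with hδdef
    have hδ1 : δ ≤ y k - x k := min_le_left _ _
    have hδ2 : δ ≤ x j - y j := min_le_right _ _
    have hδ0 : 0 < δ := lt_min (by linarith [hk1]) (by linarith [hj1.2])
    have hykyj : y k ≤ y j := hmy (le_of_lt hj1.1)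
    have hxkj : x k < x j := by linarith [hk1, hj1.2]
    set x' : Fin n → ℝ := fun i => if i = k then x k + δ else if i = j then x j - δ else x i
      with hx'def
    have hx'k : x' k = x k + δ := by simp [hx'def]
    have hx'j : x' j = x j - δ := by simp [hx'def, (Ne.symm hkj)]
    have hx'o : ∀ i, i ≠ k → i ≠ j → x' i = x i := by
      intro i h1 h2; simp [hx'def, h1, h2]
    -- concavity step : h x ≤ h x'
    have hstep : h x ≤ h x' := by
      set t := δ / (x j - x k) with htdef
      have hne0 : x j - x k ≠ 0 := by linarith
      have ht : t * (x j - x k) = δ := div_mul_cancel₀ _ hne0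
      have ht0 : 0 < t := div_pos hδ0 (by linarith)
      have ht1 : t ≤ 1 := by
        rw [div_le_one (by linarith)]
        linarith
      have hcomb : x' = (1 - t) • x + t • (x ∘ (Equiv.swap k j)) := by
        funext i
        simp only [Pi.add_apply, Pi.smul_apply, smul_eq_mul, Function.comp_apply]
        by_cases h1 : i = k
        · subst h1
          rw [hx'k, Equiv.swap_apply_left]
          nlinarith [ht]
        · by_cases h2 : i = j
          · subst h2
            rw [hx'j, Equiv.swap_apply_right]
            nlinarith [ht]
          · rw [hx'o i h1 h2, Equiv.swap_apply_of_ne_of_ne h1 h2]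
            ring
      have hxmem : x ∈ {x : Fin n → ℝ | ∀ i, 0 ≤ x i} := hx
      have hxsmem : (x ∘ (Equiv.swap k j)) ∈ {x : Fin n → ℝ | ∀ i, 0 ≤ x i} := fun i => hx _
      have := hconc.2 hxmem hxsmem (by linarith : (0:ℝ) ≤ 1 - t) (le_of_lt ht0) (by ring)
      rw [hsymm (Equiv.swap k j) x] at this
      rw [hcomb]
      simp only [smul_eq_mul] at this
      linarith
    -- invariants of x'
    have hx'0 : ∀ i, 0 ≤ x' i := by
      intro i
      by_cases h1 : i = k
      · subst h1; rw [hx'k]; linarith [hx k]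
      · by_cases h2 : i = j
        · subst h2; rw [hx'j]; linarith [hy j]
        · rw [hx'o i h1 h2]; exact hx i
    have hB1 : x' k ≤ y k := by rw [hx'k]; linarith
    have hB2 : y j ≤ x' j := by rw [hx'j]; linarith
    have hmx' : Monotone x' := by
      intro i i' hii'
      by_cases h1 : i = k
      · subst h1
        by_cases h2 : i' = k
        · subst h2; exact le_refl _
        by_cases h3 : i' = j
        · subst h3; linarith
        · have hki' : k < i' := lt_of_le_of_ne hii' (fun e => h2 e.symm)
          rw [hx'o i' h2 h3]
          rcases lt_trichotomy i' j with hc | hc | hc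
          · have := hmid i' hki' hc
            have := hmy (le_of_lt hki')
            linarith
          · exact absurd hc h3
          · have := hmx (le_of_lt hc)
            linarith [hj1.2, hykyj]
      by_cases h2 : i = j
      · subst h2
        by_cases h3 : i' = j
        · subst h3; exact le_refl _
        by_cases h4 : i' = k
        · subst h4; exact absurd (lt_of_lt_of_le hj1.1 hii') (lt_irrefl _)
        · rw [hx'o i' h4 h3, hx'j]
          have : j ≤ i' := hii'
          have := hmx this
          linarith
      -- i is neither k nor j
      rw [hx'o i h1 h2]
      by_cases h3 : i' = k
      · subst h3
        have : i ≤ k := hii'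
        have := hmx this
        rw [hx'k]
        linarith
      by_cases h4 : i' = j
      · subst h4
        have hij : i < j := lt_of_le_of_ne hii' h2
        rcases lt_trichotomy i k with hc | hc | hc
        · have := hmx (le_of_lt hc)
          linarith
        · exact absurd hc h1
        · have := hmid i hc hij
          have := hmy (le_of_lt hij)
          linarith
      · rw [hx'o i' h3 h4]
        exact hmx hii'
    -- prefix sum formula for x'
    have hPf : ∀ m : ℕ, P x' m
        = P x m + (if k.val < m then δ else 0) - (if j.val < m then δ else 0) := by
      intro m
      unfold P
      have hre : ∀ i ∈ univ.filter (fun i : Fin n => i.val < m),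
          x' i = x i + (if i = k then δ else 0) - (if i = j then δ else 0) := by
        intro i _
        by_cases h1 : i = k
        · subst h1; rw [hx'k]; simp [hkj]
        · by_cases h2 : i = j
          · subst h2; rw [hx'j]; simp [Ne.symm hkj]
          · rw [hx'o i h1 h2]; simp [h1, h2]
      rw [Finset.sum_congr rfl hre]
      rw [Finset.sum_sub_distrib, Finset.sum_add_distrib]
      congr 1
      · congr 1
        rw [Finset.sum_ite_eq' (univ.filter (fun i : Fin n => i.val < m)) k (fun _ => δ)]
        simp
      · rw [Finset.sum_ite_eq' (univ.filter (fun i : Fin n => i.val < m)) j (fun _ => δ)]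
        simp
    have hP' : ∀ m, m ≤ n → P x' m ≤ P y m := by
      intro m hm
      rw [hPf m]
      by_cases hc1 : k.val < m
      · by_cases hc2 : j.val < m
        · simp only [hc1, hc2, if_pos]
          have := hP m hm
          linarith
        · -- k < m ≤ j
          simp only [hc1, hc2, if_pos, if_neg, not_false_iff]
          have hmj : m ≤ j.val := le_of_not_gt hc2
          have hkm : k.val + 1 ≤ m := hc1
          have h1 := Psplit x hkm
          have h2 := Psplit y hkm
          have h3 := Psucc x k
          have h4 := Psucc y k
          have h5 := hP k.val (le_of_lt k.isLt)
          have htail : ∑ i ∈ univ.filter (fun i : Fin n => k.val + 1 ≤ i.val ∧ i.val < m), x i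
              = ∑ i ∈ univ.filter (fun i : Fin n => k.val + 1 ≤ i.val ∧ i.val < m), y i := by
            apply Finset.sum_congr rfl
            intro i hi
            simp only [Finset.mem_filter] at hi
            apply hmid i
            · have : k.val < i.val := by omega
              exact this
            · have : i.val < j.val := by omega
              exact this
          rw [h1, h2, htail]
          linarith
      · have hc2 : ¬ j.val < m := by
          have : k.val < j.val := hj1.1
          omega
        simp only [hc1, hc2, if_neg, not_false_iff]
        have := hP m hm
        linarith
    have hPn' : P x' n = P y n := by
      rw [hPf n]
      have hc1 : k.val < n := k.isLt
      have hc2 : j.val < n := j.isLt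
      simp only [hc1, hc2, if_pos]
      linarith
    -- cardinality decrease
    have hkmem : k ∈ univ.filter (fun i => x i ≠ y i) := by simp [ne_of_lt hk1]
    have hcard' : (univ.filter (fun i => x' i ≠ y i)).card ≤ N := by
      have hcases := min_cases (y k - x k) (x j - y j)
      have key : ∃ i0 : Fin n, i0 ∈ univ.filter (fun i => x i ≠ y i) ∧
          (univ.filter (fun i => x' i ≠ y i)) ⊆ (univ.filter (fun i => x i ≠ y i)).erase i0 := by
        rcases hcases with ⟨he, -⟩ | ⟨he, -⟩
        · refine ⟨k, hkmem, ?_⟩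
          intro i hi
          simp only [Finset.mem_filter, Finset.mem_univ, true_and] at hi
          rw [Finset.mem_erase]
          constructor
          · intro hik
            subst hik
            apply hi
            rw [hx'k, hδdef, he]
            ring
          · simp only [Finset.mem_filter, Finset.mem_univ, true_and]
            by_cases h2 : i = j
            · subst h2; exact ne_of_gt hj1.2
            · by_cases h1 : i = k
              · subst h1; exact ne_of_lt hk1
              · rw [← hx'o i h1 h2]; exact hi
        · refine ⟨j, by simp [ne_of_gt hj1.2], ?_⟩
          intro i hi
          simp only [Finset.mem_filter, Finset.mem_univ, true_and] at hi
          rw [Finset.mem_erase]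
          constructor
          · intro hij
            subst hij
            apply hi
            rw [hx'j, hδdef, he]
            ring
          · simp only [Finset.mem_filter, Finset.mem_univ, true_and]
            by_cases h1 : i = k
            · subst h1; exact ne_of_lt hk1
            · by_cases h2 : i = j
              · subst h2; exact ne_of_gt hj1.2
              · rw [← hx'o i h1 h2]; exact hi
      obtain ⟨i0, hi0, hsub⟩ := key
      have h1 := Finset.card_le_card hsub
      have h2 := Finset.card_erase_of_mem hi0
      have h3 := Finset.card_pos.mpr ⟨i0, hi0⟩
      omega
    exact le_trans hstep (ih x' y hx'0 hy hmx' hmy hP' hPn' hcard')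


lemma qk_top (x : Fin n → ℝ) : Qk x n = ∑ i, x i := by
  obtain ⟨S, hS, hEq⟩ := qk_mem x (le_refl n)
  have hSu : S = univ := Finset.eq_univ_of_card S (by rw [hS, Fintype.card_fin])
  rw [hEq, hSu]

lemma qk_sorted {x : Fin n → ℝ} (hx : Monotone x) {k : ℕ} (hk : k ≤ n) :
    Qk x k = P x k := by
  apply le_antisymm
  · exact qk_le x _ (card_filter_lt hk)
  · obtain ⟨S, hS, hEq⟩ := qk_mem x hk
    rw [hEq]
    exact prefix_le_sum hx hk S hS

lemma convex_orthant : Convex ℝ {x : Fin n → ℝ | ∀ i, 0 ≤ x i} := by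
  intro x hx y hy a b ha hb hab
  intro i
  simp only [Pi.add_apply, Pi.smul_apply, smul_eq_mul]
  have := hx i
  have := hy i
  positivity

lemma qk_concave {k : ℕ} (hk : k ≤ n) :
    ConcaveOn ℝ {x : Fin n → ℝ | ∀ i, 0 ≤ x i} (fun x : Fin n → ℝ => Qk x k) := by
  refine ⟨convex_orthant, ?_⟩
  intro x hx y hy a b ha hb hab
  obtain ⟨S, hS, hEq⟩ := qk_mem (a • x + b • y) hk
  have h1 := qk_le x S hS
  have h2 := qk_le y S hS
  have : a * Qk x k + b * Qk y k ≤ ∑ i ∈ S, (a • x + b • y) i := by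
    have e : ∑ i ∈ S, (a • x + b • y) i = a * ∑ i ∈ S, x i + b * ∑ i ∈ S, y i := by
      simp only [Pi.add_apply, Pi.smul_apply, smul_eq_mul]
      rw [Finset.sum_add_distrib, Finset.mul_sum, Finset.mul_sum]
    rw [e]
    have := mul_le_mul_of_nonneg_left h1 ha
    have := mul_le_mul_of_nonneg_left h2 hb
    linarith
  simpa [smul_eq_mul, hEq] using this

/-- Schur-type comparison for arbitrary (unsorted) vectors. -/
lemma schur (h : (Fin n → ℝ) → ℝ)
    (hsymm : ∀ (σ : Equiv.Perm (Fin n)) (x : Fin n → ℝ), h (x ∘ σ) = h x)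
    (hconc : ConcaveOn ℝ {x : Fin n → ℝ | ∀ i, 0 ≤ x i} h)
    (x y : Fin n → ℝ) (hx : ∀ i, 0 ≤ x i) (hy : ∀ i, 0 ≤ y i)
    (hQ : ∀ k, k ≤ n → Qk x k ≤ Qk y k) (hsum : ∑ i, x i = ∑ i, y i) :
    h x ≤ h y := by
  classical
  set σx := Tuple.sort x with hσx
  set σy := Tuple.sort y with hσy
  set xs := x ∘ σx with hxs
  set ys := y ∘ σy with hys
  have hmxs : Monotone xs := Tuple.monotone_sort x
  have hmys : Monotone ys := Tuple.monotone_sort y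
  have hxs0 : ∀ i, 0 ≤ xs i := fun i => hx _
  have hys0 : ∀ i, 0 ≤ ys i := fun i => hy _
  have hsum_xs : ∑ i, xs i = ∑ i, x i := Equiv.sum_comp σx x
  have hsum_ys : ∑ i, ys i = ∑ i, y i := Equiv.sum_comp σy y
  have hPk : ∀ m, m ≤ n → P xs m ≤ P ys m := by
    intro m hm
    rw [← qk_sorted hmxs hm, ← qk_sorted hmys hm, hxs, hys, qk_perm, qk_perm]
    exact hQ m hm
  have hPn : P xs n = P ys n := by
    rw [P_n, P_n, hsum_xs, hsum_ys, hsum]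
  have hcard : (univ.filter (fun i => xs i ≠ ys i)).card ≤ n := by
    calc (univ.filter (fun i => xs i ≠ ys i)).card ≤ (univ : Finset (Fin n)).card :=
          Finset.card_filter_le _ _
    _ = n := by simp
  calc h x = h xs := (hsymm σx x).symm
  _ ≤ h ys := schur_aux h hsymm hconc n xs ys hxs0 hys0 hmxs hmys hPk hPn hcard
  _ = h y := hsymm σy y

end QkAux

open QkAux in
/-- `α`-majorization (condition on all prefix sums of smallest
coordinates) is equivalent to simultaneously `α`-approximating every
symmetric, monotone, concave, nonnegative welfare function. -/
theorem stmt_15 (n : ℕ) (hn : 1 ≤ n)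
    (u u' : Fin n → ℝ) (hu : ∀ i, 0 ≤ u i) (hu' : ∀ i, 0 ≤ u' i)
    (α : ℝ) (hα : 1 ≤ α) :
    (∀ k : ℕ, 1 ≤ k → k ≤ n → Qk u' k ≤ α * Qk u k) ↔
    (∀ h : (Fin n → ℝ) → ℝ,
      (∀ x, (∀ i, 0 ≤ x i) → 0 ≤ h x) →
      (∀ (σ : Equiv.Perm (Fin n)) (x : Fin n → ℝ), h (x ∘ σ) = h x) →
      (∀ x y : Fin n → ℝ, (∀ i, 0 ≤ x i) → (∀ i, x i ≤ y i) → h x ≤ h y) →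
      ConcaveOn ℝ {x : Fin n → ℝ | ∀ i, 0 ≤ x i} h →
      h u' ≤ α * h u) := by
  classical
  have hα0 : (0:ℝ) < α := lt_of_lt_of_le one_pos hα
  constructor
  · -- (i) → (ii)
    intro hQ h hnn hsym hmono hconc
    set v : Fin n → ℝ := fun i => α * u i with hvdef
    have hv0 : ∀ i, 0 ≤ v i := fun i => mul_nonneg (le_of_lt hα0) (hu i)
    have hQv : ∀ k, k ≤ n → Qk v k = α * Qk u k := fun k hk =>
      qk_smul hk (le_of_lt hα0)
    have hsumv : ∑ i, v i = α * ∑ i, u i := by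
      rw [hvdef, Finset.mul_sum]
    have hsum_le : ∑ i, u' i ≤ ∑ i, v i := by
      have := hQ n hn (le_refl n)
      rw [qk_top, qk_top] at this
      rw [hsumv]
      exact this
    set t : ℝ := ∑ i, v i - ∑ i, u' i with htdef
    have ht0 : 0 ≤ t := by rw [htdef]; linarith
    set σ := Tuple.sort u' with hσdef
    set s : Fin n → ℝ := u' ∘ σ with hsdef
    have hms : Monotone s := Tuple.monotone_sort u'
    have hs0 : ∀ i, 0 ≤ s i := fun i => hu' _
    have hsum_s : ∑ i, s i = ∑ i, u' i := Equiv.sum_comp σ u'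
    set w : Fin n → ℝ := fun i => if i.val = n - 1 then s i + t else s i with hwdef
    have hw0 : ∀ i, 0 ≤ w i := by
      intro i
      rw [hwdef]
      dsimp only
      split
      · linarith [hs0 i]
      · exact hs0 i
    have hsw : ∀ i, s i ≤ w i := by
      intro i
      rw [hwdef]
      dsimp only
      split
      · linarith
      · exact le_refl _
    have hlast : (⟨n - 1, by omega⟩ : Fin n) ∈ (univ : Finset (Fin n)) := Finset.mem_univ _
    have hsumw : ∑ i, w i = ∑ i, v i := by
      have e1 : ∀ i : Fin n, w i = s i + (if i = (⟨n - 1, by omega⟩ : Fin n) then t else 0) := by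
        intro i
        rw [hwdef]
        dsimp only
        by_cases hc : i.val = n - 1
        · rw [if_pos hc, if_pos (Fin.ext hc)]
        · rw [if_neg hc, if_neg (fun e => hc (by rw [e]))]
          ring
      rw [Finset.sum_congr rfl (fun i _ => e1 i), Finset.sum_add_distrib,
        Finset.sum_ite_eq' univ (⟨n - 1, by omega⟩ : Fin n) (fun _ => t), if_pos hlast,
        hsum_s, htdef]
      ring
    have hQw : ∀ k, k ≤ n → Qk w k ≤ Qk v k := by
      intro k hk
      rcases eq_or_lt_of_le hk with rfl | hkn
      · rw [qk_top, qk_top, hsumw]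
      · have hk' : k ≤ n := le_of_lt hkn
        have step1 : Qk w k ≤ P s k := by
          have hcard := card_filter_lt (n := n) hk'
          have := qk_le w (univ.filter (fun i : Fin n => i.val < k)) hcard
          refine le_trans this (le_of_eq ?_)
          apply Finset.sum_congr rfl
          intro i hi
          simp only [Finset.mem_filter, Finset.mem_univ, true_and] at hi
          rw [hwdef]
          dsimp only
          rw [if_neg (by omega)]
        have step2 : P s k = Qk u' k := by
          rw [← qk_sorted hms hk', hsdef, qk_perm]
        have step3 : Qk u' k ≤ α * Qk u k := by
          rcases Nat.eq_zero_or_pos k with rfl | hk1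
          · rw [qk_zero, qk_zero]
            ring_nf
            exact le_refl _
          · exact hQ k hk1 hk'
        rw [← hQv k hk'] at step3
        linarith [step1, step2.le, step2.ge]
    have h1 : h u' = h s := (hsym σ u').symm
    have h2 : h s ≤ h w := hmono s w hs0 hsw
    have h3 : h w ≤ h v := schur h hsym hconc w v hw0 hv0 hQw hsumw
    have h4 : h v ≤ α * h u := by
      have h0mem : (fun _ : Fin n => (0:ℝ)) ∈ {x : Fin n → ℝ | ∀ i, 0 ≤ x i} :=
        fun i => le_refl 0
      have hvmem : v ∈ {x : Fin n → ℝ | ∀ i, 0 ≤ x i} := hv0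
      have hainv : (0:ℝ) ≤ α⁻¹ := inv_nonneg.mpr (le_of_lt hα0)
      have hainv1 : α⁻¹ ≤ 1 := by
        rw [inv_le_one_iff₀]
        right
        exact hα
      have hcc := hconc.2 hvmem h0mem hainv (by linarith : (0:ℝ) ≤ 1 - α⁻¹) (by ring)
      have hcomb : α⁻¹ • v + (1 - α⁻¹) • (fun _ : Fin n => (0:ℝ)) = u := by
        funext i
        simp only [Pi.add_apply, Pi.smul_apply, smul_eq_mul, hvdef]
        field_simp
        ring
      rw [hcomb] at hcc
      simp only [smul_eq_mul] at hcc
      have h0 : 0 ≤ h (fun _ : Fin n => (0:ℝ)) := hnn _ (fun i => le_refl 0)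
      have h6 : α⁻¹ * h v ≤ h u := by nlinarith
      have h7 := mul_le_mul_of_nonneg_left h6 (le_of_lt hα0)
      rw [mul_inv_cancel_left₀ (ne_of_gt hα0)] at h7
      exact h7
    linarith [h1.le, h1.ge]
  · -- (ii) → (i)
    intro hii k hk1 hkn
    exact hii (fun x => Qk x k)
      (fun x hx => qk_nonneg hkn hx)
      (fun σ x => qk_perm x σ k)
      (fun x y hx hxy => qk_mono hkn hxy)
      (qk_concave hkn)
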